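/- The minimizing subset in the TSS bound can be taken sorted: for fixed k, min over all k-element sub-multisets S of A of [TSS(A∖S)+TSS(B∪S)] equals the minimum of the same quantity over just the two choices S = (k largest elements of A) and S = (k smallest elements of A). -/

import Mathlib

/-- Total sum of squares (with the 1/2 factor) of a finite multiset of reals. -/
noncomputable def tss (X : Multiset ℝ) : ℝ :=
  (1 / 2) * (X.map (fun x => (x - X.sum / X.card) ^ 2)).sum

lemma my_sum_map_shift (c : ℝ) : ∀ X : Multiset ℝ,
    (X.map (fun x => (x - c) ^ 2)).sum
      = (X.map (fun x => x ^ 2)).sum - 2 * c * X.sum + X.card * c ^ 2 := by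
  intro X
  induction X using Multiset.induction with
  | empty => simp
  | cons a s ih =>
    simp only [Multiset.map_cons, Multiset.sum_cons, Multiset.card_cons, ih]
    push_cast
    ring

lemma my_tss_eq (X : Multiset ℝ) (h : X.card ≠ 0) :
    tss X = (1 / 2) * ((X.map (fun x => x ^ 2)).sum - X.sum ^ 2 / X.card) := by
  have hc : (X.card : ℝ) ≠ 0 := Nat.cast_ne_zero.mpr h
  unfold tss
  rw [my_sum_map_shift (X.sum / X.card) X]
  field_simp
  ring

lemma my_map_sub_sum (A S : Multiset ℝ) (h : S ≤ A) (f : ℝ → ℝ) :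
    ((A - S).map f).sum = (A.map f).sum - (S.map f).sum := by
  have h2 : (A.map f).sum = (((A - S) + S).map f).sum := by
    rw [tsub_add_cancel_of_le h]
  rw [Multiset.map_add, Multiset.sum_add] at h2
  linarith

lemma my_sub_sum (A S : Multiset ℝ) (h : S ≤ A) : (A - S).sum = A.sum - S.sum := by
  have h2 : A.sum = ((A - S) + S).sum := by rw [tsub_add_cancel_of_le h]
  rw [Multiset.sum_add] at h2
  linarith

lemma my_tss_split (A B S : Multiset ℝ) (h : S ≤ A) (h1 : 1 ≤ S.card)
    (h2 : S.card < A.card) :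
    tss (A - S) + tss (B + S)
      = (1 / 2) * ((A.map (fun x => x ^ 2)).sum + (B.map (fun x => x ^ 2)).sum)
        - (1 / 2) * ((A.sum - S.sum) ^ 2 / ((A.card : ℝ) - S.card)
            + (B.sum + S.sum) ^ 2 / ((B.card : ℝ) + S.card)) := by
  have hcard1 : (A - S).card = A.card - S.card := Multiset.card_sub h
  have hne1 : (A - S).card ≠ 0 := by rw [hcard1]; omega
  have hcard2 : (B + S).card = B.card + S.card := Multiset.card_add B S
  have hne2 : (B + S).card ≠ 0 := by rw [hcard2]; omega
  rw [my_tss_eq _ hne1, my_tss_eq _ hne2, my_map_sub_sum A S h, my_sub_sum A S h,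
    Multiset.map_add, Multiset.sum_add, Multiset.sum_add, hcard1, hcard2,
    Nat.cast_sub h2.le, Nat.cast_add]
  ring

lemma my_quad_le_max (c1 c2 a b s s1 s2 : ℝ) (hc1 : 0 < c1) (hc2 : 0 < c2)
    (h1 : s1 ≤ s) (h2 : s ≤ s2) :
    (a - s) ^ 2 / c1 + (b + s) ^ 2 / c2
      ≤ max ((a - s1) ^ 2 / c1 + (b + s1) ^ 2 / c2)
          ((a - s2) ^ 2 / c1 + (b + s2) ^ 2 / c2) := by
  simp only [div_eq_mul_inv]
  set u := c1⁻¹ with hu'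
  set v := c2⁻¹ with hv'
  have hu : 0 < u := inv_pos.mpr hc1
  have hv : 0 < v := inv_pos.mpr hc2
  set M := max ((a - s1) ^ 2 * u + (b + s1) ^ 2 * v)
      ((a - s2) ^ 2 * u + (b + s2) ^ 2 * v) with hM
  have hm1 : (a - s1) ^ 2 * u + (b + s1) ^ 2 * v ≤ M := le_max_left _ _
  have hm2 : (a - s2) ^ 2 * u + (b + s2) ^ 2 * v ≤ M := le_max_right _ _
  rcases eq_or_lt_of_le (h1.trans h2) with heq | hlt
  · have hs1 : s = s1 := le_antisymm (heq ▸ h2) h1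
    rw [hs1]; exact hm1
  · have h5 : 0 ≤ (s2 - s) * (s - s1) * (s2 - s) * (u + v) := by
      apply mul_nonneg
      apply mul_nonneg
      apply mul_nonneg <;> linarith
      all_goals linarith
    have h6 : 0 ≤ (s2 - s) * (s - s1) * (s - s1) * (u + v) := by
      apply mul_nonneg
      apply mul_nonneg
      apply mul_nonneg <;> linarith
      all_goals linarith
    have key : (s2 - s1) * ((a - s) ^ 2 * u + (b + s) ^ 2 * v)
        ≤ (s2 - s) * ((a - s1) ^ 2 * u + (b + s1) ^ 2 * v)
          + (s - s1) * ((a - s2) ^ 2 * u + (b + s2) ^ 2 * v) := by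
      nlinarith [h5, h6]
    have key2 : (s2 - s1) * ((a - s) ^ 2 * u + (b + s) ^ 2 * v) ≤ (s2 - s1) * M := by
      calc (s2 - s1) * ((a - s) ^ 2 * u + (b + s) ^ 2 * v)
          ≤ (s2 - s) * ((a - s1) ^ 2 * u + (b + s1) ^ 2 * v)
            + (s - s1) * ((a - s2) ^ 2 * u + (b + s2) ^ 2 * v) := key
        _ ≤ (s2 - s) * M + (s - s1) * M := by
            apply add_le_add
            · exact mul_le_mul_of_nonneg_left hm1 (by linarith)
            · exact mul_le_mul_of_nonneg_left hm2 (by linarith)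
        _ = (s2 - s1) * M := by ring
    exact le_of_mul_le_mul_left key2 (by linarith)

lemma my_min_sub_le (C q q1 q2 : ℝ) (h : q ≤ max q1 q2) :
    min (C - (1 / 2) * q1) (C - (1 / 2) * q2) ≤ C - (1 / 2) * q := by
  rcases le_total q1 q2 with hh | hh
  · rw [max_eq_right hh] at h
    calc min (C - (1 / 2) * q1) (C - (1 / 2) * q2) ≤ C - (1 / 2) * q2 := min_le_right _ _
      _ ≤ C - (1 / 2) * q := by linarith
  · rw [max_eq_left hh] at h
    calc min (C - (1 / 2) * q1) (C - (1 / 2) * q2) ≤ C - (1 / 2) * q1 := min_le_left _ _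
      _ ≤ C - (1 / 2) * q := by linarith

lemma my_sum_take_le : ∀ {s l : List ℝ}, s.Sublist l → l.Pairwise (· ≤ ·) →
    (l.take s.length).sum ≤ s.sum := by
  intro s l h
  induction h with
  | slnil => simp
  | @cons l₁ l₂ a h ih =>
    intro hs
    have hs₂ : l₂.Pairwise (· ≤ ·) := hs.of_cons
    cases hn : l₁.length with
    | zero =>
      have : l₁ = [] := List.length_eq_zero_iff.mp hn
      simp [this]
    | succ j =>
      have hj : j < l₂.length := by have := h.length_le; omega
      have h1 : ((a :: l₂).take (j + 1)).sum = a + (l₂.take j).sum := by simp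
      have h2 : (l₂.take (j + 1)).sum = (l₂.take j).sum + l₂[j] := by
        rw [List.take_succ]
        rw [List.getElem?_eq_getElem hj]
        rw [List.sum_append]
        simp
      have ha : a ≤ l₂[j] := (List.pairwise_cons.mp hs).1 _ (l₂.getElem_mem hj)
      have ihh := ih hs₂
      rw [hn, h2] at ihh
      rw [h1]
      linarith
  | @cons_cons l₁ l₂ a h ih =>
    intro hs
    have ihh := ih hs.of_cons
    simp only [List.length_cons, List.take_succ_cons, List.sum_cons]
    linarith

lemma my_sum_le_drop : ∀ {s l : List ℝ}, s.Sublist l → l.Pairwise (· ≤ ·) →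
    s.sum ≤ (l.drop (l.length - s.length)).sum := by
  intro s l h
  induction h with
  | slnil => simp
  | @cons l₁ l₂ a h ih =>
    intro hs
    have hlen := h.length_le
    have hd : (a :: l₂).length - l₁.length = (l₂.length - l₁.length) + 1 := by
      simp only [List.length_cons]; omega
    rw [hd, List.drop_succ_cons]
    exact ih hs.of_cons
  | @cons_cons l₁ l₂ a h ih =>
    intro hs
    have hlen := h.length_le
    rcases Nat.eq_or_lt_of_le hlen with heq | hlt
    · have : l₁ = l₂ := h.eq_of_length heq
      subst this
      simp
    · have hd : (a :: l₂).length - (a :: l₁).length = (l₂.length - l₁.length - 1) + 1 := by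
        simp only [List.length_cons]; omega
      set e := l₂.length - l₁.length - 1 with he
      have hel : e < l₂.length := by omega
      rw [hd, List.drop_succ_cons, List.sum_cons, List.drop_eq_getElem_cons hel,
        List.sum_cons]
      have ha : a ≤ l₂[e] := (List.pairwise_cons.mp hs).1 _ (l₂.getElem_mem hel)
      have ihh := ih hs.of_cons
      rw [show l₂.length - l₁.length = e + 1 by omega] at ihh
      linarith

/-- For fixed `k`, the minimum of `TSS(A∖S)+TSS(B∪S)` over all `k`-element
sub-multisets `S` of `A` is attained at `S` being the `k` smallest or the `k`
largest elements of `A`. -/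
theorem tss_min_at_sorted_extremes (A B : Multiset ℝ) (k : ℕ)
    (hk0 : 1 ≤ k) (hkn : k < A.card) :
    IsLeast {x : ℝ | ∃ S : Multiset ℝ, S ≤ A ∧ S.card = k ∧
        x = tss (A - S) + tss (B + S)}
      (min
        (tss (A - ↑((A.sort (· ≤ ·)).take k))
          + tss (B + ↑((A.sort (· ≤ ·)).take k)))
        (tss (A - ↑((A.sort (· ≤ ·)).drop (A.card - k)))
          + tss (B + ↑((A.sort (· ≤ ·)).drop (A.card - k))))) := by
  set l := A.sort (· ≤ ·) with hl
  have hlsort : l.Pairwise (· ≤ ·) := A.pairwise_sort _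
  have hlA : (↑l : Multiset ℝ) = A := A.sort_eq _
  have hlen : l.length = A.card := Multiset.length_sort _
  -- the two candidate subsets
  have hS1A : (↑(l.take k) : Multiset ℝ) ≤ A := by
    have h' : (↑(l.take k) : Multiset ℝ) ≤ ↑l :=
      Multiset.coe_le.mpr (l.take_sublist k).subperm
    rwa [hlA] at h'
  have hS2A : (↑(l.drop (A.card - k)) : Multiset ℝ) ≤ A := by
    have h' : (↑(l.drop (A.card - k)) : Multiset ℝ) ≤ ↑l :=
      Multiset.coe_le.mpr (l.drop_sublist (A.card - k)).subperm
    rwa [hlA] at h'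
  have hS1k : (↑(l.take k) : Multiset ℝ).card = k := by
    rw [Multiset.coe_card, List.length_take, hlen]; omega
  have hS2k : (↑(l.drop (A.card - k)) : Multiset ℝ).card = k := by
    rw [Multiset.coe_card, List.length_drop, hlen]; omega
  constructor
  · -- membership
    rcases le_total
        (tss (A - ↑(l.take k)) + tss (B + ↑(l.take k)))
        (tss (A - ↑(l.drop (A.card - k))) + tss (B + ↑(l.drop (A.card - k)))) with hh | hh
    · exact ⟨↑(l.take k), hS1A, hS1k, (min_eq_left hh)⟩
    · exact ⟨↑(l.drop (A.card - k)), hS2A, hS2k, (min_eq_right hh)⟩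
  · -- lower bound
    rintro x ⟨S, hSA, hSk, rfl⟩
    have hc1 : (0 : ℝ) < (A.card : ℝ) - k := by
      have : (k : ℝ) < A.card := by exact_mod_cast hkn
      linarith
    have hc2 : (0 : ℝ) < (B.card : ℝ) + k := by
      have : (1 : ℝ) ≤ (k : ℝ) := by exact_mod_cast hk0
      have : (0 : ℝ) ≤ (B.card : ℝ) := Nat.cast_nonneg _
      positivity
    -- sum bounds via sorted sublists
    have hsub : (S.sort (· ≤ ·)).Sublist l := by
      apply List.sublist_of_subperm_of_pairwise _ (S.pairwise_sort _) hlsort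
      apply Multiset.coe_le.mp
      rw [Multiset.sort_eq, hlA]
      exact hSA
    have hslen : (S.sort (· ≤ ·)).length = k := by rw [Multiset.length_sort, hSk]
    have hssum : (S.sort (· ≤ ·)).sum = S.sum := by
      calc (S.sort (· ≤ ·)).sum = (↑(S.sort (· ≤ ·)) : Multiset ℝ).sum :=
            (Multiset.sum_coe _).symm
        _ = S.sum := by rw [Multiset.sort_eq]
    have low : (l.take k).sum ≤ S.sum := by
      have := my_sum_take_le hsub hlsort
      rwa [hslen, hssum] at this
    have high : S.sum ≤ (l.drop (A.card - k)).sum := by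
      have := my_sum_le_drop hsub hlsort
      rwa [hslen, hssum, hlen] at this
    have hsum1 : (↑(l.take k) : Multiset ℝ).sum = (l.take k).sum := Multiset.sum_coe _
    have hsum2 : (↑(l.drop (A.card - k)) : Multiset ℝ).sum = (l.drop (A.card - k)).sum :=
      Multiset.sum_coe _
    have e1 : 1 ≤ (↑(l.take k) : Multiset ℝ).card := by rw [hS1k]; exact hk0
    have e2 : (↑(l.take k) : Multiset ℝ).card < A.card := by rw [hS1k]; exact hkn
    have e3 : 1 ≤ (↑(l.drop (A.card - k)) : Multiset ℝ).card := by rw [hS2k]; exact hk0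
    have e4 : (↑(l.drop (A.card - k)) : Multiset ℝ).card < A.card := by rw [hS2k]; exact hkn
    have e5 : 1 ≤ S.card := by rw [hSk]; exact hk0
    have e6 : S.card < A.card := by rw [hSk]; exact hkn
    rw [my_tss_split A B S hSA e5 e6,
      my_tss_split A B _ hS1A e1 e2,
      my_tss_split A B _ hS2A e3 e4,
      hSk, hS1k, hS2k, hsum1, hsum2]
    apply my_min_sub_le
    exact my_quad_le_max _ _ A.sum B.sum S.sum _ _ hc1 hc2 low high
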